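/- Let p > 1 and let y : [x₀, ∞) → ℝ solve (|y'|^{p-2}y')' = x^p |y|^{p-2} y with x₀ ≥ 0, y(x₀) = 0 and y'(x₀) = 0. Then y is identically zero on [x₀, ∞). -/

import Mathlib

open Real Filter

lemma abs_w_eq (p : ℝ) (hp : 1 < p) (a : ℝ) :
    abs (|a| ^ (p - 2) * a) = |a| ^ (p - 1) := by
  rcases eq_or_ne a 0 with rfl | ha
  · simp [Real.zero_rpow (by linarith : p - 1 ≠ 0)]
  · have h1 : (0:ℝ) < |a| := abs_pos.2 ha
    rw [abs_mul, abs_of_nonneg (Real.rpow_nonneg (abs_nonneg a) _),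
      ← Real.rpow_add_one h1.ne']
    ring_nf

lemma key_id (p : ℝ) (hp : 1 < p) (a : ℝ) :
    abs (|a| ^ (p - 2) * a) ^ (p / (p - 1) - 2) * (|a| ^ (p - 2) * a) = a := by
  rcases eq_or_ne a 0 with rfl | ha
  · simp
  · have h1 : (0:ℝ) < |a| := abs_pos.2 ha
    have hp1 : p - 1 ≠ 0 := by linarith
    have hexp : (p - 1) * (p / (p - 1) - 2) = 2 - p := by field_simp; ring
    rw [abs_w_eq p hp a, ← Real.rpow_mul (abs_nonneg a), hexp]
    calc |a| ^ (2 - p) * (|a| ^ (p - 2) * a) = |a| ^ (2 - p) * |a| ^ (p - 2) * a := by ring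
    _ = a := by rw [← Real.rpow_add h1, show 2 - p + (p - 2) = 0 by ring, Real.rpow_zero, one_mul]

theorem stmt4 (p x₀ : ℝ) (hp : 1 < p) (hx₀ : 0 ≤ x₀) (y : ℝ → ℝ)
    (hy : ∀ x ∈ Set.Ici x₀, DifferentiableAt ℝ y x)
    (hode : ∀ x ∈ Set.Ici x₀,
      HasDerivAt (fun t => |deriv y t| ^ (p - 2) * deriv y t)
        (x ^ p * |y x| ^ (p - 2) * y x) x)
    (h0 : y x₀ = 0) (h1 : deriv y x₀ = 0) :
    ∀ x ∈ Set.Ici x₀, y x = 0 := by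
  have hp0 : (0:ℝ) < p := by linarith
  have hp1 : (0:ℝ) < p - 1 := by linarith
  set q : ℝ := p / (p - 1) with hqdef
  have hq : 1 < q := (one_lt_div hp1).2 (by linarith)
  set w : ℝ → ℝ := fun t => |deriv y t| ^ (p - 2) * deriv y t with hwdef
  set E : ℝ → ℝ := fun t => (p - 1) / p * |w t| ^ q - 1 / p * (t ^ p * |y t| ^ p) with hEdef
  have hEderiv : ∀ x ∈ Set.Ici x₀, HasDerivAt E (-(x ^ (p - 1) * |y x| ^ p)) x := by
    intro x hx
    have hx0 : 0 ≤ x := le_trans hx₀ hx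
    have hy' : HasDerivAt y (deriv y x) x := (hy x hx).hasDerivAt
    have hwq : HasDerivAt (fun t => |w t| ^ q)
        (q * |w x| ^ (q - 2) * w x * (x ^ p * |y x| ^ (p - 2) * y x)) x := by
      have h := (hasDerivAt_abs_rpow (w x) hq).comp x (hode x hx)
      simp only [Function.comp_def] at h
      convert h using 1
    have hyp2 : HasDerivAt (fun t => |y t| ^ p)
        (p * |y x| ^ (p - 2) * y x * deriv y x) x := by
      have h := (hasDerivAt_abs_rpow (y x) hp).comp x hy'
      simp only [Function.comp_def] at h
      convert h using 1
    have hxp : HasDerivAt (fun t : ℝ => t ^ p) (p * x ^ (p - 1)) x :=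
      Real.hasDerivAt_rpow_const (Or.inr hp.le)
    have hprod := hxp.mul hyp2
    have hcomb := (hwq.const_mul ((p-1)/p)).sub (hprod.const_mul (1/p))
    refine hcomb.congr_deriv ?_
    have hkey : |w x| ^ (q - 2) * w x = deriv y x := key_id p hp (deriv y x)
    rw [show q * |w x| ^ (q - 2) * w x * (x ^ p * |y x| ^ (p - 2) * y x)
        = q * (|w x| ^ (q - 2) * w x) * (x ^ p * |y x| ^ (p - 2) * y x) by ring, hkey, hqdef]
    field_simp
    ring
  have hE0 : E x₀ = 0 := by
    have hw0 : w x₀ = 0 := by simp [hwdef, h1]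
    simp [hEdef, hw0, h0, Real.zero_rpow (by linarith : q ≠ 0),
      Real.zero_rpow (by linarith : p ≠ 0)]
  have hanti : AntitoneOn E (Set.Ici x₀) := by
    apply antitoneOn_of_deriv_nonpos (convex_Ici x₀)
    · intro t ht
      exact (hEderiv t ht).continuousAt.continuousWithinAt
    · intro t ht
      rw [interior_Ici] at ht
      exact (hEderiv t (Set.mem_Ici.2 (le_of_lt ht))).differentiableAt.differentiableWithinAt
    · intro t ht
      rw [interior_Ici] at ht
      rw [(hEderiv t (Set.mem_Ici.2 (le_of_lt ht))).deriv]
      have hnn : 0 ≤ t ^ (p-1) * |y t| ^ p :=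
        mul_nonneg (Real.rpow_nonneg (le_trans hx₀ (le_of_lt ht)) _)
          (Real.rpow_nonneg (abs_nonneg _) _)
      linarith
  have hbound : ∀ x ∈ Set.Ici x₀, |deriv y x| ^ p ≤ x ^ p * |y x| ^ p / (p - 1) := by
    intro x hx
    have hEx : E x ≤ 0 := hE0 ▸ hanti Set.self_mem_Ici hx hx
    have habs : |w x| ^ q = |deriv y x| ^ p := by
      rw [show |w x| = |deriv y x| ^ (p - 1) from abs_w_eq p hp _,
        ← Real.rpow_mul (abs_nonneg _)]
      congr 1
      rw [hqdef]
      field_simp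
    simp only [hEdef] at hEx
    rw [habs] at hEx
    rw [le_div_iff₀ hp1]
    have h3 := mul_le_mul_of_nonneg_left hEx hp0.le
    rw [mul_zero] at h3
    have hpne : p ≠ 0 := hp0.ne'
    have h4 : p * ((p - 1) / p * |deriv y x| ^ p - 1 / p * (x ^ p * |y x| ^ p))
        = (p - 1) * |deriv y x| ^ p - x ^ p * |y x| ^ p := by
      field_simp
    rw [h4] at h3
    linarith
  -- Gronwall
  intro b hb
  have hb0 : 0 ≤ b := le_trans hx₀ hb
  set K : ℝ := b / (p - 1) ^ (p⁻¹) with hKdef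
  have hden : (0:ℝ) < (p - 1) ^ (p⁻¹) := Real.rpow_pos_of_pos hp1 _
  have hK0 : 0 ≤ K := div_nonneg hb0 hden.le
  have key : ∀ x ∈ Set.Icc x₀ b, ‖y x‖ ≤ gronwallBound 0 K 0 (x - x₀) := by
    apply norm_le_gronwallBound_of_norm_deriv_right_le
    · intro t ht
      exact ((hy t ht.1).continuousAt).continuousWithinAt
    · intro t ht
      exact ((hy t ht.1).hasDerivAt).hasDerivWithinAt
    · simp [h0]
    · intro t ht
      have ht0 : 0 ≤ t := le_trans hx₀ ht.1
      rw [Real.norm_eq_abs, Real.norm_eq_abs, add_zero]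
      have hKy : 0 ≤ K * |y t| := mul_nonneg hK0 (abs_nonneg _)
      by_contra hc
      push_neg at hc
      have hlt : (K * |y t|) ^ p < |deriv y t| ^ p :=
        Real.rpow_lt_rpow hKy hc hp0
      have heq : (K * |y t|) ^ p = b ^ p * |y t| ^ p / (p - 1) := by
        rw [Real.mul_rpow hK0 (abs_nonneg _), hKdef,
          Real.div_rpow hb0 hden.le, ← Real.rpow_mul hp1.le,
          inv_mul_cancel₀ hp0.ne', Real.rpow_one]
        ring
      have hle : |deriv y t| ^ p ≤ b ^ p * |y t| ^ p / (p - 1) := by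
        refine le_trans (hbound t ht.1) ?_
        have htb : t ^ p ≤ b ^ p := Real.rpow_le_rpow ht0 ht.2.le hp0.le
        have hyn : 0 ≤ |y t| ^ p := Real.rpow_nonneg (abs_nonneg _) _
        gcongr
      rw [heq] at hlt
      linarith
  have hfin := key b (Set.right_mem_Icc.2 hb)
  rw [gronwallBound_ε0] at hfin
  simp only [zero_mul] at hfin
  rw [Real.norm_eq_abs] at hfin
  exact abs_eq_zero.1 (le_antisymm hfin (abs_nonneg _))
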